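/- Let k be an algebraically closed field with char k ≠ 2. Let s ∈ M₅(k) be nonzero and diagonalizable with sᵀ = −s and Tr(s²) = 0, and let n ∈ M₅(k) be nilpotent with nᵀ = −n and s·n = n·s. Then n = 0. -/
import Mathlib

open Matrix Polynomial

private lemma expand5m {k : Type*} [CommRing k] (d : Fin 5 → k) :
    ∏ i, (X - C (d i)) =
      X ^ 5 - C (d 0 + d 1 + d 2 + d 3 + d 4) * X ^ 4
        + C (d 0 * d 1 + d 0 * d 2 + d 0 * d 3 + d 0 * d 4 + d 1 * d 2 + d 1 * d 3 + d 1 * d 4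
              + d 2 * d 3 + d 2 * d 4 + d 3 * d 4) * X ^ 3
        - C (d 0 * d 1 * d 2 + d 0 * d 1 * d 3 + d 0 * d 1 * d 4 + d 0 * d 2 * d 3
              + d 0 * d 2 * d 4 + d 0 * d 3 * d 4 + d 1 * d 2 * d 3 + d 1 * d 2 * d 4
              + d 1 * d 3 * d 4 + d 2 * d 3 * d 4) * X ^ 2
        + C (d 0 * d 1 * d 2 * d 3 + d 0 * d 1 * d 2 * d 4 + d 0 * d 1 * d 3 * d 4
              + d 0 * d 2 * d 3 * d 4 + d 1 * d 2 * d 3 * d 4) * X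
        - C (d 0 * d 1 * d 2 * d 3 * d 4) := by
  simp only [Fin.prod_univ_five, Polynomial.C_add, Polynomial.C_mul]
  ring

private lemma expand5p {k : Type*} [CommRing k] (d : Fin 5 → k) :
    ∏ i, (X + C (d i)) =
      X ^ 5 + C (d 0 + d 1 + d 2 + d 3 + d 4) * X ^ 4
        + C (d 0 * d 1 + d 0 * d 2 + d 0 * d 3 + d 0 * d 4 + d 1 * d 2 + d 1 * d 3 + d 1 * d 4
              + d 2 * d 3 + d 2 * d 4 + d 3 * d 4) * X ^ 3
        + C (d 0 * d 1 * d 2 + d 0 * d 1 * d 3 + d 0 * d 1 * d 4 + d 0 * d 2 * d 3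
              + d 0 * d 2 * d 4 + d 0 * d 3 * d 4 + d 1 * d 2 * d 3 + d 1 * d 2 * d 4
              + d 1 * d 3 * d 4 + d 2 * d 3 * d 4) * X ^ 2
        + C (d 0 * d 1 * d 2 * d 3 + d 0 * d 1 * d 2 * d 4 + d 0 * d 1 * d 3 * d 4
              + d 0 * d 2 * d 3 * d 4 + d 1 * d 2 * d 3 * d 4) * X
        + C (d 0 * d 1 * d 2 * d 3 * d 4) := by
  simp only [Fin.prod_univ_five, Polynomial.C_add, Polynomial.C_mul]
  ring

/-- Over an algebraically closed field of characteristic `≠ 2`, if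
`s ∈ so₅(k)` (that is, `sᵀ = -s`) is nonzero, diagonalizable and satisfies `Tr(s²) = 0`,
and `n ∈ so₅(k)` is nilpotent and commutes with `s`, then `n = 0`. -/
theorem stmt10 (k : Type*) [Field k] [IsAlgClosed k] (h2 : (2 : k) ≠ 0)
    (s : Matrix (Fin 5) (Fin 5) k) (hs0 : s ≠ 0)
    (hdiag : ∃ g : Matrix (Fin 5) (Fin 5) k, IsUnit g.det ∧ (g * s * g⁻¹).IsDiag)
    (hskew : sᵀ = -s) (hQ : (s * s).trace = 0)
    (n : Matrix (Fin 5) (Fin 5) k) (hnil : IsNilpotent n) (hnskew : nᵀ = -n)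
    (hcomm : s * n = n * s) :
    n = 0 := by
  obtain ⟨g, hg, hD⟩ := hdiag
  set D := g * s * g⁻¹ with hDdef
  set d : Fin 5 → k := fun i => D i i with hddef
  have hDd : D = diagonal d := hD.diagonal_diag.symm
  have hgi : g⁻¹ * g = 1 := nonsing_inv_mul g hg
  have hgi' : g * g⁻¹ = 1 := mul_nonsing_inv g hg
  have hgu : IsUnit g := (isUnit_iff_isUnit_det g).mpr hg
  have hsD : g⁻¹ * D * g = s := by
    rw [hDdef, show g⁻¹ * (g * s * g⁻¹) * g = (g⁻¹ * g) * s * (g⁻¹ * g) by noncomm_ring, hgi,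
      one_mul, mul_one]
  -- scalar identity  ∏ (t - dᵢ) = ∏ (t + dᵢ)
  have key : ∀ t : k, ∏ i, (t - d i) = ∏ i, (t + d i) := by
    intro t
    have h1 : (t • (1 : Matrix (Fin 5) (Fin 5) k) - D).det = ∏ i, (t - d i) := by
      rw [hDd, smul_one_eq_diagonal, diagonal_sub, det_diagonal]
    have h2' : (t • (1 : Matrix (Fin 5) (Fin 5) k) + D).det = ∏ i, (t + d i) := by
      rw [hDd, smul_one_eq_diagonal, diagonal_add, det_diagonal]
    have hconjsmul : g * (t • (1 : Matrix (Fin 5) (Fin 5) k)) * g⁻¹ = t • 1 := by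
      rw [mul_smul_comm, mul_one, smul_mul_assoc, hgi']
    have h3 : t • (1 : Matrix (Fin 5) (Fin 5) k) - D = g * (t • 1 - s) * g⁻¹ := by
      rw [Matrix.mul_sub, Matrix.sub_mul, hconjsmul, hDdef]
    have h4 : t • (1 : Matrix (Fin 5) (Fin 5) k) + D = g * (t • 1 + s) * g⁻¹ := by
      rw [Matrix.mul_add, Matrix.add_mul, hconjsmul, hDdef]
    have hdet : (t • (1 : Matrix (Fin 5) (Fin 5) k) - s).det = (t • 1 + s).det := by
      conv_lhs => rw [← det_transpose]
      rw [transpose_sub, transpose_smul, transpose_one, hskew, sub_neg_eq_add]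
    calc ∏ i, (t - d i) = (t • (1 : Matrix (Fin 5) (Fin 5) k) - D).det := h1.symm
      _ = (t • (1 : Matrix (Fin 5) (Fin 5) k) - s).det := by rw [h3, det_conj hgu]
      _ = (t • (1 : Matrix (Fin 5) (Fin 5) k) + s).det := hdet
      _ = (t • (1 : Matrix (Fin 5) (Fin 5) k) + D).det := by rw [h4, det_conj hgu]
      _ = ∏ i, (t + d i) := h2'
  have hPQ : (∏ i, (X - C (d i))) = ∏ i, (X + C (d i)) :=
    Polynomial.funext fun t => by simp [eval_prod, key t]
  rw [expand5m d, expand5p d] at hPQ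
  -- coefficient extraction
  have hc4 := congrArg (fun p => coeff p 4) hPQ
  have hc2 := congrArg (fun p => coeff p 2) hPQ
  have hc0 := congrArg (fun p => coeff p 0) hPQ
  simp only [coeff_add, coeff_sub, coeff_C_mul, coeff_X_pow, coeff_C, coeff_X] at hc4 hc2 hc0
  norm_num at hc4 hc2 hc0
  have hE1 : d 0 + d 1 + d 2 + d 3 + d 4 = 0 := by
    rcases mul_eq_zero.mp (show (2 : k) * (d 0 + d 1 + d 2 + d 3 + d 4) = 0 by
      linear_combination -hc4) with h | h
    · exact absurd h h2
    · exact h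
  have hE3 : d 0 * d 1 * d 2 + d 0 * d 1 * d 3 + d 0 * d 1 * d 4 + d 0 * d 2 * d 3
      + d 0 * d 2 * d 4 + d 0 * d 3 * d 4 + d 1 * d 2 * d 3 + d 1 * d 2 * d 4
      + d 1 * d 3 * d 4 + d 2 * d 3 * d 4 = 0 := by
    rcases mul_eq_zero.mp (show (2 : k) * (d 0 * d 1 * d 2 + d 0 * d 1 * d 3 + d 0 * d 1 * d 4
        + d 0 * d 2 * d 3 + d 0 * d 2 * d 4 + d 0 * d 3 * d 4 + d 1 * d 2 * d 3 + d 1 * d 2 * d 4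
        + d 1 * d 3 * d 4 + d 2 * d 3 * d 4) = 0 by linear_combination -hc2) with h | h
    · exact absurd h h2
    · exact h
  have hE5 : d 0 * d 1 * d 2 * d 3 * d 4 = 0 := by
    rcases mul_eq_zero.mp (show (2 : k) * (d 0 * d 1 * d 2 * d 3 * d 4) = 0 by
      linear_combination -hc0) with h | h
    · exact absurd h h2
    · exact h
  -- trace of s² gives sum of squares of eigenvalues
  have hDD : D * D = g * (s * s) * g⁻¹ := by
    rw [hDdef]
    calc (g * s * g⁻¹) * (g * s * g⁻¹) = g * s * ((g⁻¹ * g) * (s * g⁻¹)) := by noncomm_ring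
      _ = g * (s * s) * g⁻¹ := by rw [hgi, one_mul]; noncomm_ring
  have hsq : d 0 * d 0 + d 1 * d 1 + d 2 * d 2 + d 3 * d 3 + d 4 * d 4 = 0 := by
    have h1 : (D * D).trace = (s * s).trace := by
      rw [hDD, trace_mul_comm (g * (s * s)) g⁻¹, ← Matrix.mul_assoc, hgi, one_mul]
    have h2' : (D * D).trace = d 0 * d 0 + d 1 * d 1 + d 2 * d 2 + d 3 * d 3 + d 4 * d 4 := by
      rw [hDd, diagonal_mul_diagonal, trace_diagonal, Fin.sum_univ_five]
    rw [← h2', h1, hQ]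
  have hE2 : d 0 * d 1 + d 0 * d 2 + d 0 * d 3 + d 0 * d 4 + d 1 * d 2 + d 1 * d 3 + d 1 * d 4
      + d 2 * d 3 + d 2 * d 4 + d 3 * d 4 = 0 := by
    rcases mul_eq_zero.mp (show (2 : k) * (d 0 * d 1 + d 0 * d 2 + d 0 * d 3 + d 0 * d 4
        + d 1 * d 2 + d 1 * d 3 + d 1 * d 4 + d 2 * d 3 + d 2 * d 4 + d 3 * d 4) = 0 by
      linear_combination (d 0 + d 1 + d 2 + d 3 + d 4) * hE1 - hsq) with h | h
    · exact absurd h h2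
    · exact h
  set e4 : k := d 0 * d 1 * d 2 * d 3 + d 0 * d 1 * d 2 * d 4 + d 0 * d 1 * d 3 * d 4
      + d 0 * d 2 * d 3 * d 4 + d 1 * d 2 * d 3 * d 4 with he4def
  have hP : ∏ i, (X - C (d i)) = X ^ 5 + C e4 * X := by
    rw [expand5m d, hE1, hE2, hE3, hE5, he4def]
    simp only [map_zero, zero_mul, sub_zero, add_zero, zero_add, Polynomial.C_add,
      Polynomial.C_mul]
  -- e4 ≠ 0
  have he4 : e4 ≠ 0 := by
    intro h
    rw [h, map_zero, zero_mul, add_zero] at hP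
    have hdz : ∀ i, d i = 0 := by
      intro i
      have hev := congrArg (Polynomial.eval (d i)) hP
      simp only [eval_prod, eval_sub, eval_X, eval_C, eval_pow] at hev
      have hz : ∏ j, (d i - d j) = 0 := Finset.prod_eq_zero (Finset.mem_univ i) (sub_self _)
      rw [hz] at hev
      exact pow_eq_zero_iff (by norm_num : (5 : ℕ) ≠ 0) |>.mp hev.symm
    apply hs0
    have hD0 : D = 0 := by
      rw [hDd, show d = fun _ => (0 : k) from funext hdz]
      simp [Matrix.diagonal_zero]
    rw [← hsD, hD0, Matrix.mul_zero, Matrix.zero_mul]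
  -- eigenvalues are pairwise distinct
  have hinj : Function.Injective d := by
    intro i j hij
    by_contra hne
    have hmem : j ∈ Finset.univ.erase i :=
      Finset.mem_erase.mpr ⟨fun h => hne h.symm, Finset.mem_univ j⟩
    have hfac : ∏ x, (X - C (d x)) =
        (X - C (d i)) * ((X - C (d j)) * ∏ x ∈ (Finset.univ.erase i).erase j, (X - C (d x))) := by
      rw [← Finset.mul_prod_erase Finset.univ _ (Finset.mem_univ i),
        ← Finset.mul_prod_erase (Finset.univ.erase i) _ hmem]
    set r := d i with hrdef
    have hPfac : X ^ 5 + C e4 * X =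
        (X - C r) * ((X - C r) * ∏ x ∈ (Finset.univ.erase i).erase j, (X - C (d x))) := by
      rw [← hP, hfac, ← hij]
    have hevA := congrArg (Polynomial.eval r) hPfac
    simp only [eval_add, eval_mul, eval_pow, eval_X, eval_C, eval_sub, sub_self, zero_mul] at hevA
    have hevB := congrArg (Polynomial.eval r) (congrArg Polynomial.derivative hPfac)
    simp only [derivative_add, derivative_mul, derivative_X_pow, derivative_C, derivative_X,
      derivative_sub, zero_mul, mul_one, eval_add, eval_mul, eval_pow, eval_X, eval_C,
      eval_sub, sub_self, zero_add, add_zero, zero_mul, mul_zero, eval_natCast] at hevB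
    -- hevA : r^5 + e4 * r = 0 ;  hevB : 5 * r^4 + e4 = 0
    have h4k : (4 : k) ≠ 0 := by
      intro h
      exact h2 (by rcases mul_eq_zero.mp (show (2 : k) * 2 = 0 by linear_combination h) with h' | h' <;> exact h')
    have hr5 : (4 : k) * r ^ 5 = 0 := by linear_combination r * hevB - hevA
    have hr : r = 0 := by
      rcases mul_eq_zero.mp hr5 with h | h
      · exact absurd h h4k
      · exact pow_eq_zero_iff (by norm_num : (5 : ℕ) ≠ 0) |>.mp h
    apply he4
    rw [hr] at hevB
    linear_combination hevB
  -- conjugate n, show it is diagonal and nilpotent, hence zero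
  set m := g * n * g⁻¹ with hmdef
  have hDm : D * m = m * D := by
    rw [hDdef, hmdef]
    calc (g * s * g⁻¹) * (g * n * g⁻¹) = g * s * ((g⁻¹ * g) * (n * g⁻¹)) := by noncomm_ring
      _ = g * (s * n) * g⁻¹ := by rw [hgi, one_mul]; noncomm_ring
      _ = g * (n * s) * g⁻¹ := by rw [hcomm]
      _ = g * n * ((g⁻¹ * g) * (s * g⁻¹)) := by rw [hgi, one_mul]; noncomm_ring
      _ = (g * n * g⁻¹) * (g * s * g⁻¹) := by noncomm_ring
  have hoff : ∀ i j, i ≠ j → m i j = 0 := by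
    intro i j hij
    have hDm' : diagonal d * m = m * diagonal d := by rw [← hDd]; exact hDm
    have hentry' : d i * m i j = m i j * d j := by
      have := congrFun (congrFun hDm' i) j
      rwa [diagonal_mul, mul_diagonal] at this
    have hsub : (d i - d j) * m i j = 0 := by linear_combination hentry'
    rcases mul_eq_zero.mp hsub with h | h
    · exact absurd (sub_eq_zero.mp h) (fun h' => hij (hinj h'))
    · exact h
  have hmdiag : m = diagonal (fun i => m i i) := by
    ext i j
    by_cases h : i = j
    · subst h; simp [diagonal_apply_eq]
    · rw [diagonal_apply_ne _ h, hoff i j h]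
  obtain ⟨K, hK⟩ := hnil
  have hpow : ∀ t : ℕ, (g * n * g⁻¹) ^ t = g * n ^ t * g⁻¹ := by
    intro t
    induction t with
    | zero => simp [pow_zero, hgi']
    | succ t ih =>
      rw [pow_succ, ih, pow_succ]
      calc g * n ^ t * g⁻¹ * (g * n * g⁻¹) = g * n ^ t * ((g⁻¹ * g) * (n * g⁻¹)) := by noncomm_ring
        _ = g * (n ^ t * n) * g⁻¹ := by rw [hgi, one_mul]; noncomm_ring
  have hmK : m ^ K = 0 := by
    rw [hmdef, hpow, hK, Matrix.mul_zero, Matrix.zero_mul]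
  have hdz : ∀ i, m i i = 0 := by
    intro i
    have hd : diagonal ((fun i => m i i) ^ K) = 0 := by
      rw [← Matrix.diagonal_pow, ← hmdiag, hmK]
    have hKi : ((fun i => m i i) ^ K) i = 0 := by
      have := congrFun (congrFun hd i) i
      rwa [diagonal_apply_eq, Matrix.zero_apply] at this
    exact IsNilpotent.eq_zero ⟨K, hKi⟩
  have hm0 : m = 0 := by
    rw [hmdiag, show (fun i => m i i) = (fun _ => (0 : k)) from funext hdz]
    exact Matrix.diagonal_zero
  have : g⁻¹ * m * g = n := by
    rw [hmdef, show g⁻¹ * (g * n * g⁻¹) * g = (g⁻¹ * g) * n * (g⁻¹ * g) by noncomm_ring, hgi,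
      one_mul, mul_one]
  rw [← this, hm0, Matrix.mul_zero, Matrix.zero_mul]
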